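/- Let σ=(Σ_i)_{i∈[k]} be a trace alphabet, κ_ω the capacity function with κ_ω(i) = ω for all i ∈ [k], and A, B nondeterministic Büchi automata over Σ. If A ⊑^{κ_ω}_σ B, then there exists a continuous, trace-preserving function f : ARun(A) → ARun(B). -/

import Mathlib

open Classical

noncomputable section

namespace MultiBuffer

/-! ### Nondeterministic Büchi automata -/

/-- A nondeterministic Büchi automaton over the alphabet `α`. -/
structure NBA (α : Type) : Type 1 where
  Q : Type
  finQ : Fintype Q
  init : Q
  δ : Q → α → Set Q
  F : Set Q

variable {α P Q : Type} {k : ℕ}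

/-- `r` is (the state sequence of) a run of `A` on the infinite word `w`. -/
def IsRun (A : NBA α) (w : ℕ → α) (r : ℕ → A.Q) : Prop :=
  r 0 = A.init ∧ ∀ n, r (n + 1) ∈ A.δ (r n) (w n)

/-- The state sequence `r` visits accepting states infinitely often. -/
def AcceptingStates (A : NBA α) (r : ℕ → A.Q) : Prop :=
  {n | r n ∈ A.F}.Infinite

/-- The ω-language of a Büchi automaton. -/
def Lang (A : NBA α) : Set (ℕ → α) :=
  {w | ∃ r, IsRun A w r ∧ AcceptingStates A r}

/-! ### Finite or infinite words, projections and trace equivalence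

A finite or infinite word over `α` is represented as a function `ℕ → Option α`
which is `none` from some point on (if finite); infinite words embed via `ofInf`. -/

/-- The infinite word `u` viewed as an element of `Σ^∞`. -/
def ofInf (u : ℕ → α) : ℕ → Option α := fun n => some (u n)

/-- A function `ℕ → Option α` represents a finite or infinite word if after the
first `none` everything is `none`. -/
def Stable (w : ℕ → Option α) : Prop := ∀ n, w n = none → w (n + 1) = none

/-- The number of `i < j` satisfying `p`. -/
def countBelow (p : ℕ → Prop) (j : ℕ) : ℕ := {i | i < j ∧ p i}.ncard

/-- Position `j` of the word `w` carries a letter belonging to `S`. -/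
def InS (S : Set α) (w : ℕ → Option α) (j : ℕ) : Prop := ∃ a ∈ S, w j = some a

/-- The projection `π_S(w)` of the word `w` to the subalphabet `S`: the word obtained
from `w` by deleting all letters not in `S`. -/
def proj (S : Set α) (w : ℕ → Option α) (n : ℕ) : Option α :=
  if h : ∃ j, InS S w j ∧ countBelow (InS S w) j = n then w h.choose else none

/-- Trace equivalence of (finite or infinite) words w.r.t. the trace alphabet
`σ = (Σ_i)_{i ∈ [k]}` : all projections coincide. -/
def TraceEquiv (σ : Fin k → Set α) (u v : ℕ → Option α) : Prop :=
  ∀ i, proj (σ i) u = proj (σ i) v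

/-- The trace closure of a language of infinite words. -/
def closure (σ : Fin k → Set α) (L : Set (ℕ → α)) : Set (ℕ → α) :=
  {v | ∃ u ∈ L, TraceEquiv σ (ofInf u) (ofInf v)}

/-! ### The multi-buffer game -/

/-- A configuration of the multi-buffer game: a state of Spoiler's automaton,
the contents of the `k` buffers, and a state of Duplicator's automaton. -/
structure Conf (α P Q : Type) (k : ℕ) where
  p : P
  bufs : Fin k → List α
  q : Q

/-- Appending the letter `a` to the back of every buffer `i` with `a ∈ σ i`. -/
def push (σ : Fin k → Set α) (bufs : Fin k → List α) (a : α) : Fin k → List α :=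
  fun i => if a ∈ σ i then bufs i ++ [a] else bufs i

/-- Popping the letter `b` from the front of every buffer `i` with `b ∈ σ i`. -/
def pop (σ : Fin k → Set α) (bufs : Fin k → List α) (b : α) : Fin k → List α :=
  fun i => if b ∈ σ i then (bufs i).tail else bufs i

/-- Effect of a Spoiler move `m = (a, p')` on a configuration. -/
def spApply (σ : Fin k → Set α) (c : Conf α P Q k) (m : α × P) : Conf α P Q k :=
  ⟨m.2, push σ c.bufs m.1, c.q⟩

/-- Effect of a (possibly empty) Duplicator move `d = (b₁,q₁)...(b_n,q_n)`. -/
def dupApply (σ : Fin k → Set α) (c : Conf α P Q k) (d : List (α × Q)) : Conf α P Q k :=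
  ⟨c.p, d.foldl (fun bs m => pop σ bs m.1) c.bufs, ((d.getLast?).map Prod.snd).getD c.q⟩

/-- Legality of a Spoiler move: it follows a transition of his automaton. -/
def SpLegal (δA : P → α → Set P) (c : Conf α P Q k) (m : α × P) : Prop :=
  m.2 ∈ δA c.p m.1

/-- Legality of a Duplicator move from a configuration: the moves form a run of her
automaton and each letter is removed from the front of the corresponding buffers. -/
def DupLegal (σ : Fin k → Set α) (δB : Q → α → Set Q) :
    Conf α P Q k → List (α × Q) → Prop
  | _, [] => True
  | c, m :: rest =>
      m.2 ∈ δB c.q m.1 ∧ (∀ i, m.1 ∈ σ i → (c.bufs i).head? = some m.1) ∧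
      DupLegal σ δB ⟨c.p, pop σ c.bufs m.1, m.2⟩ rest

/-- The capacity constraints (checked after a full round). -/
def CapOk (κ : Fin k → ℕ∞) (c : Conf α P Q k) : Prop :=
  ∀ i, ((c.bufs i).length : ℕ∞) ≤ κ i

/-- The list of the first `n` values of the sequence `s`. -/
def hist {β : Type} (s : ℕ → β) (n : ℕ) : List β := List.ofFn (fun i : Fin n => s i)

/-- The configuration of the play after `n` full rounds, when Spoiler plays the
sequence `s` of moves and Duplicator follows the strategy `θ` (which maps the
history of Spoiler moves, including the current one, to her response). -/
def playConf (σ : Fin k → Set α) (θ : List (α × P) → List (α × Q))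
    (c0 : Conf α P Q k) (s : ℕ → α × P) : ℕ → Conf α P Q k
  | 0 => c0
  | n + 1 => dupApply σ (spApply σ (playConf σ θ c0 s n) (s n)) (θ (hist s (n + 1)))

/-- Duplicator's response in round `n`. -/
def resp (θ : List (α × P) → List (α × Q)) (s : ℕ → α × P) (n : ℕ) : List (α × Q) :=
  θ (hist s (n + 1))

/-- Spoiler's move in round `n` is legal. -/
def SpLegalAt (σ : Fin k → Set α) (δA : P → α → Set P) (θ : List (α × P) → List (α × Q))
    (c0 : Conf α P Q k) (s : ℕ → α × P) (n : ℕ) : Prop :=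
  SpLegal δA (playConf σ θ c0 s n) (s n)

/-- Duplicator's response in round `n` is legal and the capacities are respected
after the round. -/
def DupOkAt (σ : Fin k → Set α) (κ : Fin k → ℕ∞) (δB : Q → α → Set Q)
    (θ : List (α × P) → List (α × Q)) (c0 : Conf α P Q k) (s : ℕ → α × P) (n : ℕ) : Prop :=
  DupLegal σ δB (spApply σ (playConf σ θ c0 s n) (s n)) (resp θ s n) ∧
  CapOk κ (playConf σ θ c0 s (n + 1))

/-- The number of occurrences of the letter `a` in Spoiler's word. -/
def spOcc (s : ℕ → α × P) (a : α) : ℕ∞ := {n | (s n).1 = a}.encard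

/-- The number of occurrences of the letter `a` in Duplicator's word. -/
def dupOcc (θ : List (α × P) → List (α × Q)) (s : ℕ → α × P) (a : α) : ℕ∞ :=
  {x : ℕ × ℕ | ∃ m, (resp θ s x.1)[x.2]? = some m ∧ m.1 = a}.encard

/-- Spoiler's run is accepting. -/
def SpAccept (FA : Set P) (s : ℕ → α × P) : Prop := {n | (s n).2 ∈ FA}.Infinite

/-- Duplicator's run is (infinite and) accepting. -/
def DupAccept (FB : Set Q) (θ : List (α × P) → List (α × Q)) (s : ℕ → α × P) : Prop :=
  {n | ∃ m ∈ resp θ s n, m.2 ∈ FB}.Infinite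

/-- Duplicator has a winning strategy in the multi-buffer game (with buffer alphabets
`σ`, capacities `κ`) played on the transition structures `δA`, `δB` with acceptance
sets `FA`, `FB`, starting from the configuration `c0`: she always has legal responses
(as long as Spoiler has played legally), and if the resulting infinite play carries an
accepting run of Spoiler then her own run is infinite and accepting and every letter
occurs equally often in both words (i.e. every letter put into a buffer is eventually
read). Finite plays in which a player is stuck are lost by that player. -/
def DupWinsFrom (σ : Fin k → Set α) (κ : Fin k → ℕ∞) (δA : P → α → Set P)
    (δB : Q → α → Set Q) (FA : Set P) (FB : Set Q) (c0 : Conf α P Q k) : Prop :=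
  ∃ θ : List (α × P) → List (α × Q),
    ∀ s : ℕ → α × P,
      (∀ n, (∀ m ≤ n, SpLegalAt σ δA θ c0 s m) → DupOkAt σ κ δB θ c0 s n) ∧
      ((∀ n, SpLegalAt σ δA θ c0 s n) → SpAccept FA s →
        DupAccept FB θ s ∧ ∀ a : α, spOcc s a = dupOcc θ s a)

/-- The multi-buffer simulation `A ⊑^κ_σ B`. -/
def Simu (σ : Fin k → Set α) (κ : Fin k → ℕ∞) (A B : NBA α) : Prop :=
  DupWinsFrom σ κ A.δ B.δ A.F B.F ⟨A.init, fun _ => [], B.init⟩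


/-! ### Accepting runs, the metric on runs, continuity and trace preservation -/

variable {α : Type}

/-- The set of accepting runs of an NBA, as a type: a run `q₀ a₀ q₁ a₁ ⋯` is given
by its state sequence and its word, and it must start in the initial state, follow
the transition function, and visit `F` infinitely often. -/
def ARun (A : NBA α) : Type :=
  {x : (ℕ → A.Q) × (ℕ → α) //
    x.1 0 = A.init ∧ (∀ n, x.1 (n + 1) ∈ A.δ (x.1 n) (x.2 n)) ∧ {n | x.1 n ∈ A.F}.Infinite}

/-- An accepting run viewed as the infinite sequence `q₀ a₀ q₁ a₁ ⋯ ∈ (Q ∪ Σ)^ω`. -/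
def seqOf {A : NBA α} (ρ : ARun A) : ℕ → A.Q ⊕ α :=
  fun n => if n % 2 = 0 then Sum.inl (ρ.val.1 (n / 2)) else Sum.inr (ρ.val.2 (n / 2))

/-- Continuity of `f : ARun A → ARun B` with respect to the metric
`d(x,y) = inf {2^{-i} ∣ x_j = y_j for all j < i}` on the sequences in `(Q ∪ Σ)^ω`:
for every run `ρ` and every required output precision `2^{-n}` there is an input
precision `2^{-m}` such that runs `2^{-m}`-close to `ρ` are mapped to runs
`2^{-n}`-close to `f ρ`. -/
def ContinuousRF {A B : NBA α} (f : ARun A → ARun B) : Prop :=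
  ∀ (ρ : ARun A) (n : ℕ), ∃ m : ℕ, ∀ ρ' : ARun A,
    (∀ j < m, seqOf ρ' j = seqOf ρ j) → ∀ j < n, seqOf (f ρ') j = seqOf (f ρ) j

/-- `f : ARun A → ARun B` is trace-preserving: the word of `f ρ` is trace
equivalent to the word of `ρ`. -/
def TracePres {k : ℕ} (σ : Fin k → Set α) {A B : NBA α} (f : ARun A → ARun B) : Prop :=
  ∀ ρ : ARun A, TraceEquiv σ (ofInf ρ.val.2) (ofInf (f ρ).val.2)

/-- The capacity function making all `k` buffers unbounded. -/
def kapAllOmega (k : ℕ) : Fin k → ℕ∞ := fun _ => ⊤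

/-- first `n` letters of `u`. -/
def prefList (u : ℕ → α) : ℕ → List α
  | 0 => []
  | n + 1 => prefList u n ++ [u n]

@[simp] lemma prefList_length (u : ℕ → α) (n : ℕ) : (prefList u n).length = n := by
  induction n with
  | zero => rfl
  | succ n ih => simp [prefList, ih]

lemma prefList_getElem? (u : ℕ → α) {j n : ℕ} (h : j < n) :
    (prefList u n)[j]? = some (u j) := by
  induction n with
  | zero => omega
  | succ n ih =>
    rcases Nat.lt_succ_iff_lt_or_eq.1 h with h' | h'
    · rw [prefList, List.getElem?_append, if_pos (by simpa using h')]
      exact ih h'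
    · subst h'
      rw [prefList, List.getElem?_append_right (by simp), prefList_length]
      simp

lemma prefList_prefix (u : ℕ → α) {n m : ℕ} (h : n ≤ m) :
    prefList u n <+: prefList u m := by
  induction m with
  | zero => simpa using (Nat.le_zero.1 h) ▸ List.prefix_refl _
  | succ m ih =>
    rcases Nat.le_succ_iff.1 h with h' | h'
    · exact (ih h').trans ⟨[u m], rfl⟩
    · subst h'; exact List.prefix_refl _

lemma getElem?_of_prefix {β : Type} {l₁ l₂ : List β} (h : l₁ <+: l₂) {j : ℕ}
    (hj : j < l₁.length) : l₂[j]? = l₁[j]? := by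
  obtain ⟨t, rfl⟩ := h
  rw [List.getElem?_append, if_pos hj]

/-- number of occurrences of `a` in `L` (countP based, no BEq). -/
def cnt (a : α) (L : List α) : ℕ := L.countP (fun x => decide (x = a))

lemma cnt_append (a : α) (L₁ L₂ : List α) : cnt a (L₁ ++ L₂) = cnt a L₁ + cnt a L₂ :=
  List.countP_append

lemma cnt_le_of_sublist {a : α} {L₁ L₂ : List α} (h : L₁.Sublist L₂) :
    cnt a L₁ ≤ cnt a L₂ := h.countP_le

lemma cnt_eq_card_filter (a : α) (L : List α) :
    cnt a L = ((Finset.range L.length).filter (fun j => L[j]? = some a)).card := by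
  induction L using List.reverseRecOn with
  | nil => simp [cnt]
  | append_singleton L b ih =>
    rw [cnt_append]
    have hlen : (L ++ [b]).length = L.length + 1 := by simp
    rw [hlen, Finset.range_add_one, Finset.filter_insert]
    have hcongr : (Finset.range L.length).filter (fun j => (L ++ [b])[j]? = some a)
        = (Finset.range L.length).filter (fun j => L[j]? = some a) := by
      apply Finset.filter_congr
      intro j hj
      rw [List.getElem?_append, if_pos (Finset.mem_range.1 hj)]
    have hb : (L ++ [b])[L.length]? = some b := by
      rw [List.getElem?_append_right le_rfl]
      simp
    by_cases hba : b = a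
    · subst hba
      rw [if_pos hb, hcongr, Finset.card_insert_of_notMem (by simp), ← ih]
      simp [cnt, List.countP_cons]
    · rw [if_neg (by simp [hb, hba]), hcongr, ← ih]
      simp [cnt, hba]

lemma cnt_prefList (a : α) (u : ℕ → α) (n : ℕ) :
    cnt a (prefList u n) = ((Finset.range n).filter (fun m => u m = a)).card := by
  induction n with
  | zero => simp [cnt, prefList]
  | succ n ih =>
    rw [prefList, cnt_append, Finset.range_add_one, Finset.filter_insert]
    by_cases hna : u n = a
    · rw [if_pos hna, Finset.card_insert_of_notMem (by simp), ← ih]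
      simp [cnt, List.countP_cons, hna]
    · rw [if_neg hna, ← ih]
      simp [cnt, List.countP_cons, hna]

lemma length_filter_eq_sum [Fintype α] (S : Set α) (L : List α) :
    (L.filter (fun x => decide (x ∈ S))).length = ∑ a : α, if a ∈ S then cnt a L else 0 := by
  induction L with
  | nil => simp [cnt]
  | cons b L ih =>
    have hcnt : ∀ a : α, cnt a (b :: L) = cnt a L + if b = a then 1 else 0 := by
      intro a; simp [cnt, List.countP_cons]
    have hsum : ∑ a : α, (if a ∈ S then cnt a (b :: L) else 0)
        = (∑ a : α, if a ∈ S then cnt a L else 0) + (if b ∈ S then 1 else 0) := by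
      have : ∀ a : α, (if a ∈ S then cnt a (b :: L) else 0)
          = (if a ∈ S then cnt a L else 0) + (if b = a then (if a ∈ S then 1 else 0) else 0) := by
        intro a
        by_cases ha : a ∈ S <;> by_cases hba : b = a <;>
          simp [ha, hba, hcnt a, cnt, List.countP_cons]
      rw [Finset.sum_congr rfl (fun a _ => this a), Finset.sum_add_distrib,
        Finset.sum_ite_eq Finset.univ b (fun a => if a ∈ S then 1 else 0)]
      simp
    rw [hsum]
    by_cases hb : b ∈ S
    · simp [List.filter_cons, hb, ih]
    · simp [List.filter_cons, hb, ih]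

lemma countBelow_eq_card (p : ℕ → Prop) (j : ℕ) :
    countBelow p j = ((Finset.range j).filter p).card := by
  rw [countBelow, ← Set.ncard_coe_finset]
  congr 1
  ext i
  simp [and_comm]

@[simp] lemma InS_ofInf (S : Set α) (u : ℕ → α) (j : ℕ) :
    InS S (ofInf u) j ↔ u j ∈ S := by
  simp [InS, ofInf, eq_comm]

lemma countBelow_ofInf (S : Set α) (u : ℕ → α) (j : ℕ) :
    countBelow (InS S (ofInf u)) j
      = ((prefList u j).filter (fun x => decide (x ∈ S))).length := by
  rw [countBelow_eq_card]
  induction j with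
  | zero => simp [prefList]
  | succ j ih =>
    rw [Finset.range_add_one, Finset.filter_insert, prefList, List.filter_append]
    by_cases hj : u j ∈ S
    · rw [if_pos (by simpa using hj), Finset.card_insert_of_notMem (by simp), ih]
      simp [hj]
    · rw [if_neg (by simpa using hj), ih]
      simp [hj]

lemma countBelow_lt (p : ℕ → Prop) {j j' : ℕ} (hp : p j) (h : j < j') :
    countBelow p j < countBelow p j' := by
  rw [countBelow_eq_card, countBelow_eq_card]
  apply Finset.card_lt_card
  constructor
  · exact Finset.filter_subset_filter _ (Finset.range_subset_range.2 h.le)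
  · intro hsub
    have : j ∈ (Finset.range j').filter p := by simp [h, hp]
    have := hsub this
    simp at this

lemma countBelow_inj (p : ℕ → Prop) {j j' : ℕ} (hj : p j) (hj' : p j')
    (h : countBelow p j = countBelow p j') : j = j' := by
  rcases lt_trichotomy j j' with h' | h' | h'
  · exact absurd h (countBelow_lt p hj h').ne
  · exact h'
  · exact absurd h.symm (countBelow_lt p hj' h').ne

lemma proj_eq_some {S : Set α} {u : ℕ → α} {j m : ℕ} (hj : u j ∈ S)
    (hm : countBelow (InS S (ofInf u)) j = m) : proj S (ofInf u) m = some (u j) := by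
  have hjIn : InS S (ofInf u) j := (InS_ofInf S u j).2 hj
  have hex : ∃ j', InS S (ofInf u) j' ∧ countBelow (InS S (ofInf u)) j' = m := ⟨j, hjIn, hm⟩
  rw [proj, dif_pos hex]
  have hspec := hex.choose_spec
  have : hex.choose = j := countBelow_inj _ hspec.1 hjIn (hspec.2.trans hm.symm)
  rw [this]; rfl

lemma proj_eq_none {S : Set α} {u : ℕ → α} {m : ℕ}
    (h : ¬ ∃ j, u j ∈ S ∧ countBelow (InS S (ofInf u)) j = m) :
    proj S (ofInf u) m = none := by
  rw [proj, dif_neg]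
  intro ⟨j, hj, hm⟩
  exact h ⟨j, (InS_ofInf S u j).1 hj, hm⟩

lemma filter_witness {S : Set α} (u : ℕ → α) {m : ℕ} : ∀ {N : ℕ},
    m < ((prefList u N).filter (fun x => decide (x ∈ S))).length →
    ∃ j < N, u j ∈ S ∧ ((prefList u j).filter (fun x => decide (x ∈ S))).length = m ∧
      ((prefList u N).filter (fun x => decide (x ∈ S)))[m]? = some (u j) := by
  intro N
  induction N with
  | zero => intro h; simp [prefList] at h
  | succ N ih =>
    intro h
    rw [prefList, List.filter_append] at h ⊢
    by_cases hm : m < ((prefList u N).filter (fun x => decide (x ∈ S))).length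
    · obtain ⟨j, hjN, hjS, hcnt, hval⟩ := ih hm
      exact ⟨j, hjN.trans (Nat.lt_succ_self N), hjS, hcnt,
        by rw [List.getElem?_append, if_pos hm]; exact hval⟩
    · push_neg at hm
      have hNS : u N ∈ S := by
        by_contra hNS
        rw [List.length_append] at h
        simp [hNS] at h
        omega
      have hfN : List.filter (fun x => decide (x ∈ S)) [u N] = [u N] := by simp [hNS]
      rw [List.length_append, hfN] at h
      have hmeq : m = ((prefList u N).filter (fun x => decide (x ∈ S))).length := by
        simp at h; omega
      refine ⟨N, Nat.lt_succ_self N, hNS, hmeq.symm, ?_⟩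
      rw [List.getElem?_append_right hm, hfN, hmeq]
      simp

lemma exists_witness_trans {S : Set α} {u v : ℕ → α}
    (h1 : ∀ n, ∃ N, (prefList u n).filter (fun x => decide (x ∈ S))
      <+: (prefList v N).filter (fun x => decide (x ∈ S)))
    {j m : ℕ} (hj : u j ∈ S) (hm : countBelow (InS S (ofInf u)) j = m) :
    ∃ j', v j' ∈ S ∧ countBelow (InS S (ofInf v)) j' = m ∧ v j' = u j := by
  have hcnt : ((prefList u j).filter (fun x => decide (x ∈ S))).length = m := by
    rw [← countBelow_ofInf]; exact hm
  have hstep : (prefList u (j+1)).filter (fun x => decide (x ∈ S))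
      = (prefList u j).filter (fun x => decide (x ∈ S)) ++ [u j] := by
    rw [prefList, List.filter_append]
    simp [hj]
  have hval : ((prefList u (j+1)).filter (fun x => decide (x ∈ S)))[m]? = some (u j) := by
    rw [hstep, ← hcnt, List.getElem?_append_right le_rfl]
    simp
  have hlt : m < ((prefList u (j+1)).filter (fun x => decide (x ∈ S))).length := by
    rw [hstep, List.length_append, hcnt]; simp
  obtain ⟨N, hN⟩ := h1 (j+1)
  have hltN : m < ((prefList v N).filter (fun x => decide (x ∈ S))).length :=
    lt_of_lt_of_le hlt hN.length_le
  have hvalN : ((prefList v N).filter (fun x => decide (x ∈ S)))[m]? = some (u j) := by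
    rw [getElem?_of_prefix hN hlt]; exact hval
  obtain ⟨j', _, hj'S, hcnt', hval'⟩ := filter_witness v hltN
  refine ⟨j', hj'S, ?_, ?_⟩
  · rw [countBelow_ofInf]; exact hcnt'
  · have := hval'.symm.trans hvalN
    exact Option.some_injective _ this

lemma proj_eq_of_mutual (S : Set α) (u v : ℕ → α)
    (h1 : ∀ n, ∃ N, (prefList u n).filter (fun x => decide (x ∈ S))
      <+: (prefList v N).filter (fun x => decide (x ∈ S)))
    (h2 : ∀ n, ∃ N, (prefList v n).filter (fun x => decide (x ∈ S))
      <+: (prefList u N).filter (fun x => decide (x ∈ S))) :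
    proj S (ofInf u) = proj S (ofInf v) := by
  funext m
  by_cases hU : ∃ j, u j ∈ S ∧ countBelow (InS S (ofInf u)) j = m
  · obtain ⟨j, hj, hm⟩ := hU
    obtain ⟨j', hj'S, hm', hvv⟩ := exists_witness_trans h1 hj hm
    rw [proj_eq_some hj hm, proj_eq_some hj'S hm', hvv]
  · have hV : ¬ ∃ j, v j ∈ S ∧ countBelow (InS S (ofInf v)) j = m := by
      intro ⟨j', hj', hm'⟩
      obtain ⟨j, hjS, hm, _⟩ := exists_witness_trans h2 hj' hm'
      exact hU ⟨j, hjS, hm⟩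
    rw [proj_eq_none hU, proj_eq_none hV]

section GameLemmas

variable {P Q : Type} {k : ℕ} {σ : Fin k → Set α} {δB : Q → α → Set Q}

/-- Concatenation of Duplicator's first `n` responses. -/
def flatL (θ : List (α × P) → List (α × Q)) (s : ℕ → α × P) : ℕ → List (α × Q)
  | 0 => []
  | n + 1 => flatL θ s n ++ resp θ s n

lemma flatL_prefix (θ : List (α × P) → List (α × Q)) (s : ℕ → α × P) {n m : ℕ}
    (h : n ≤ m) : flatL θ s n <+: flatL θ s m := by
  induction m with
  | zero => simpa using (Nat.le_zero.1 h) ▸ List.prefix_refl _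
  | succ m ih =>
    rcases Nat.le_succ_iff.1 h with h' | h'
    · exact (ih h').trans ⟨resp θ s m, rfl⟩
    · subst h'; exact List.prefix_refl _

lemma flatL_len_mono (θ : List (α × P) → List (α × Q)) (s : ℕ → α × P) {n m : ℕ}
    (h : n ≤ m) : (flatL θ s n).length ≤ (flatL θ s m).length :=
  (flatL_prefix θ s h).length_le

/-- The `j`-th element of Duplicator's infinite concatenated response. -/
noncomputable def fget (θ : List (α × P) → List (α × Q)) (s : ℕ → α × P) (j : ℕ) :
    Option (α × Q) :=
  if h : ∃ m, j < (flatL θ s m).length then (flatL θ s h.choose)[j]? else none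

lemma fget_eq {θ : List (α × P) → List (α × Q)} {s : ℕ → α × P} {m j : ℕ}
    (hj : j < (flatL θ s m).length) : fget θ s j = (flatL θ s m)[j]? := by
  have hex : ∃ m', j < (flatL θ s m').length := ⟨m, hj⟩
  rw [fget, dif_pos hex]
  rcases le_total hex.choose m with h | h
  · rw [getElem?_of_prefix (flatL_prefix θ s h) hex.choose_spec]
  · rw [getElem?_of_prefix (flatL_prefix θ s h) hj]

lemma fget_round {θ : List (α × P) → List (α × Q)} {s : ℕ → α × P} {n l : ℕ}
    (hl : l < (resp θ s n).length) :
    fget θ s ((flatL θ s n).length + l) = some ((resp θ s n)[l]) := by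
  have hj : (flatL θ s n).length + l < (flatL θ s (n + 1)).length := by
    simp only [flatL, List.length_append]
    omega
  rw [fget_eq hj]
  show (flatL θ s n ++ resp θ s n)[(flatL θ s n).length + l]? = _
  rw [List.getElem?_append_right (by omega)]
  simp [hl]

/-- State sequence of Duplicator's run. -/
noncomputable def qseq (θ : List (α × P) → List (α × Q)) (s : ℕ → α × P)
    (q0 : Q) (dflt : α × Q) : ℕ → Q
  | 0 => q0
  | j + 1 => ((fget θ s j).getD dflt).2

/-- Word of Duplicator's run. -/
noncomputable def vword (θ : List (α × P) → List (α × Q)) (s : ℕ → α × P)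
    (dflt : α × Q) (j : ℕ) : α := ((fget θ s j).getD dflt).1

lemma dupLegal_bufs {c : Conf α P Q k} {d : List (α × Q)}
    (h : DupLegal σ δB c d) (i : Fin k) :
    c.bufs i = ((d.map Prod.fst).filter (fun a => decide (a ∈ σ i)))
      ++ (d.foldl (fun bs m => pop σ bs m.1) c.bufs) i := by
  induction d generalizing c with
  | nil => simp
  | cons m rest ih =>
    obtain ⟨hδ, hhead, hrest⟩ := h
    have hih := ih (c := ⟨c.p, pop σ c.bufs m.1, m.2⟩) hrest
    simp only [List.foldl_cons, List.map_cons, List.filter_cons] at hih ⊢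
    by_cases hm : m.1 ∈ σ i
    · have hh := hhead i hm
      have hbuf : c.bufs i = m.1 :: (c.bufs i).tail := by
        cases hb : c.bufs i with
        | nil => rw [hb] at hh; simp at hh
        | cons b t => rw [hb] at hh; simp at hh; simp [hh]
      have hpop : pop σ c.bufs m.1 i = (c.bufs i).tail := by simp [pop, hm]
      rw [hbuf, if_pos (by simpa using hm), List.cons_append]
      congr 1
      rw [← hpop]
      exact hih
    · have hpop : pop σ c.bufs m.1 i = c.bufs i := by simp [pop, hm]
      rw [if_neg (by simpa using hm), ← hpop]
      simpa using hih

lemma dupLegal_zero {c : Conf α P Q k} {d : List (α × Q)}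
    (h : DupLegal σ δB c d) (h0 : 0 < d.length) :
    (d[0]).2 ∈ δB c.q (d[0]).1 := by
  cases d with
  | nil => simp at h0
  | cons m rest => exact h.1

lemma dupLegal_succ {c : Conf α P Q k} {d : List (α × Q)}
    (h : DupLegal σ δB c d) {l : ℕ} (hl : l + 1 < d.length) :
    (d[l + 1]).2 ∈ δB (d[l]).2 (d[l + 1]).1 := by
  induction d generalizing c l with
  | nil => simp at hl
  | cons m rest ih =>
    obtain ⟨hδ, hhead, hrest⟩ := h
    cases l with
    | zero =>
      have h0 : 0 < rest.length := by simpa using hl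
      simpa using dupLegal_zero hrest h0
    | succ l =>
      have hl' : l + 1 < rest.length := by simpa using hl
      simpa using ih hrest hl'

end GameLemmas


section GameLemmas2

variable {P Q : Type} {k : ℕ} {σ : Fin k → Set α} {δB : Q → α → Set Q}
  {θ : List (α × P) → List (α × Q)} {c0 : Conf α P Q k} {s : ℕ → α × P}

lemma playConf_succ (n : ℕ) :
    playConf σ θ c0 s (n + 1)
      = dupApply σ (spApply σ (playConf σ θ c0 s n) (s n)) (resp θ s n) := rfl

lemma playConf_q_succ (n : ℕ) :
    (playConf σ θ c0 s (n + 1)).q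
      = (((resp θ s n).getLast?).map Prod.snd).getD ((playConf σ θ c0 s n).q) := rfl

/-- `qseq` visits, at the end of each round, the same state as the play. -/
lemma qseq_flatLen {dflt : α × Q} (n : ℕ) :
    qseq θ s c0.q dflt ((flatL θ s n).length) = (playConf σ θ c0 s n).q := by
  induction n with
  | zero => rfl
  | succ n ih =>
    have hlen : (flatL θ s (n + 1)).length = (flatL θ s n).length + (resp θ s n).length := by
      simp [flatL]
    rcases Nat.eq_zero_or_pos (resp θ s n).length with h0 | h0
    · have : (flatL θ s (n + 1)).length = (flatL θ s n).length := by omega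
      rw [this, ih, playConf_q_succ]
      rw [List.eq_nil_of_length_eq_zero h0]
      rfl
    · have hL : (flatL θ s (n + 1)).length = ((flatL θ s n).length + ((resp θ s n).length - 1)) + 1 := by
        omega
      rw [hL]
      show ((fget θ s ((flatL θ s n).length + ((resp θ s n).length - 1))).getD dflt).2 = _
      rw [fget_round (by omega)]
      rw [playConf_q_succ, List.getLast?_eq_getElem?,
        List.getElem?_eq_getElem (by omega)]
      rfl

/-- Decompose any position into a round and an offset. -/
lemma exists_decomp (Hlen : ∀ j, ∃ m, j < (flatL θ s m).length) (j : ℕ) :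
    ∃ n l, l < (resp θ s n).length ∧ j = (flatL θ s n).length + l := by
  have hex := Hlen j
  have hne : Nat.find hex ≠ 0 := by
    intro h0
    have := Nat.find_spec hex
    rw [h0] at this
    simp [flatL] at this
  obtain ⟨n, hn⟩ := Nat.exists_eq_succ_of_ne_zero hne
  have h1 : j < (flatL θ s (n + 1)).length := by
    have := Nat.find_spec hex; rwa [hn] at this
  have h2 : ¬ j < (flatL θ s n).length := Nat.find_min hex (by omega)
  have hlen : (flatL θ s (n + 1)).length = (flatL θ s n).length + (resp θ s n).length := by
    simp [flatL]
  exact ⟨n, j - (flatL θ s n).length, by omega, by omega⟩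

/-- The constructed sequence is a run of Duplicator's automaton. -/
lemma qseq_step {dflt : α × Q}
    (Hleg : ∀ n, DupLegal σ δB (spApply σ (playConf σ θ c0 s n) (s n)) (resp θ s n))
    (Hlen : ∀ j, ∃ m, j < (flatL θ s m).length) (j : ℕ) :
    qseq θ s c0.q dflt (j + 1) ∈ δB (qseq θ s c0.q dflt j) (vword θ s dflt j) := by
  obtain ⟨n, l, hl, rfl⟩ := exists_decomp Hlen j
  have hq1 : qseq θ s c0.q dflt ((flatL θ s n).length + l + 1) = ((resp θ s n)[l]).2 := by
    show ((fget θ s ((flatL θ s n).length + l)).getD dflt).2 = _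
    rw [fget_round hl]; rfl
  have hv : vword θ s dflt ((flatL θ s n).length + l) = ((resp θ s n)[l]).1 := by
    rw [vword, fget_round hl]; rfl
  rw [hq1, hv]
  cases l with
  | zero =>
    have hq0 : qseq θ s c0.q dflt ((flatL θ s n).length + 0) = (playConf σ θ c0 s n).q := by
      rw [Nat.add_zero]; exact qseq_flatLen n
    rw [hq0]
    exact dupLegal_zero (Hleg n) (by omega)
  | succ l =>
    have hq0 : qseq θ s c0.q dflt ((flatL θ s n).length + (l + 1)) = ((resp θ s n)[l]).2 := by
      show ((fget θ s ((flatL θ s n).length + l)).getD dflt).2 = _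
      rw [fget_round (by omega)]; rfl
    rw [hq0]
    exact dupLegal_succ (Hleg n) hl

/-- Total length of Duplicator's responses is unbounded. -/
lemma hlen_of_acc {FB : Set Q}
    (Hacc : {n | ∃ mm ∈ resp θ s n, mm.2 ∈ FB}.Infinite) (j : ℕ) :
    ∃ m, j < (flatL θ s m).length := by
  induction j with
  | zero =>
    obtain ⟨n, hn⟩ := Hacc.nonempty
    obtain ⟨mm, hmm, _⟩ := hn
    refine ⟨n + 1, ?_⟩
    have : 0 < (resp θ s n).length := List.length_pos_iff.2 (List.ne_nil_of_mem hmm)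
    simp only [flatL, List.length_append]
    omega
  | succ j ih =>
    obtain ⟨m, hm⟩ := ih
    obtain ⟨n, hn, hmn⟩ := Hacc.exists_gt m
    obtain ⟨mm, hmm, _⟩ := hn
    refine ⟨n + 1, ?_⟩
    have h1 : 0 < (resp θ s n).length := List.length_pos_iff.2 (List.ne_nil_of_mem hmm)
    have h2 : (flatL θ s m).length ≤ (flatL θ s n).length := flatL_len_mono θ s hmn.le
    simp only [flatL, List.length_append]
    omega

/-- The buffer invariant: spoiler's projected word = duplicator's projected word
followed by the buffer contents. -/
lemma buffer_inv (Hc0 : ∀ i, c0.bufs i = [])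
    (Hleg : ∀ n, DupLegal σ δB (spApply σ (playConf σ θ c0 s n) (s n)) (resp θ s n))
    (i : Fin k) (n : ℕ) :
    (prefList (fun m => (s m).1) n).filter (fun a => decide (a ∈ σ i))
      = (((flatL θ s n).map Prod.fst).filter (fun a => decide (a ∈ σ i)))
        ++ (playConf σ θ c0 s n).bufs i := by
  induction n with
  | zero => simp [prefList, flatL, playConf, Hc0 i]
  | succ n ih =>
    have hpush : push σ (playConf σ θ c0 s n).bufs (s n).1 i
        = (playConf σ θ c0 s n).bufs i ++ ([(s n).1].filter (fun a => decide (a ∈ σ i))) := by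
      by_cases hm : (s n).1 ∈ σ i <;> simp [push, hm]
    have hb := dupLegal_bufs (Hleg n) i
    have hsp : (spApply σ (playConf σ θ c0 s n) (s n)).bufs i
        = push σ (playConf σ θ c0 s n).bufs (s n).1 i := rfl
    have hnew : ((resp θ s n).foldl (fun bs m => pop σ bs m.1)
          (spApply σ (playConf σ θ c0 s n) (s n)).bufs) i
        = (playConf σ θ c0 s (n + 1)).bufs i := rfl
    rw [hsp, hnew] at hb
    calc (prefList (fun m => (s m).1) (n + 1)).filter (fun a => decide (a ∈ σ i))
        = ((prefList (fun m => (s m).1) n).filter (fun a => decide (a ∈ σ i)))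
            ++ ([(s n).1].filter (fun a => decide (a ∈ σ i))) := by
          rw [prefList, List.filter_append]
      _ = (((flatL θ s n).map Prod.fst).filter (fun a => decide (a ∈ σ i)))
            ++ ((playConf σ θ c0 s n).bufs i ++ ([(s n).1].filter (fun a => decide (a ∈ σ i)))) := by
          rw [ih, List.append_assoc]
      _ = (((flatL θ s n).map Prod.fst).filter (fun a => decide (a ∈ σ i)))
            ++ (push σ (playConf σ θ c0 s n).bufs (s n).1 i) := by rw [hpush]
      _ = (((flatL θ s n).map Prod.fst).filter (fun a => decide (a ∈ σ i)))
            ++ ((((resp θ s n).map Prod.fst).filter (fun a => decide (a ∈ σ i)))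
              ++ (playConf σ θ c0 s (n + 1)).bufs i) := by rw [← hb]
      _ = (((flatL θ s (n + 1)).map Prod.fst).filter (fun a => decide (a ∈ σ i)))
            ++ (playConf σ θ c0 s (n + 1)).bufs i := by
          rw [← List.append_assoc]
          congr 1
          rw [flatL, List.map_append, List.filter_append]

end GameLemmas2


section GameLemmas3

variable {P Q : Type} {k : ℕ} {σ : Fin k → Set α}
  {θ : List (α × P) → List (α × Q)} {s : ℕ → α × P}

lemma hist_congr {β : Type} {s s' : ℕ → β} {n : ℕ} (h : ∀ m < n, s m = s' m) :
    hist s n = hist s' n := by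
  unfold hist
  congr 1
  funext i
  exact h i i.2

lemma flatL_congr {s' : ℕ → α × P} {n : ℕ} (h : ∀ m < n, s m = s' m) :
    flatL θ s n = flatL θ s' n := by
  induction n with
  | zero => rfl
  | succ n ih =>
    rw [flatL, flatL, ih (fun m hm => h m (by omega)), resp, resp,
      hist_congr (fun m hm => h m (by omega))]

/-- From the equality of occurrence counts: every prefix count of a letter in
Spoiler's word is matched by some prefix of Duplicator's word. -/
lemma exists_dup_count (Hocc : ∀ a, spOcc s a = dupOcc θ s a) (a : α) (n : ℕ) :
    ∃ m, cnt a (prefList (fun m' => (s m').1) n) ≤ cnt a ((flatL θ s m).map Prod.fst) := by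
  classical
  set c := cnt a (prefList (fun m' => (s m').1) n) with hc
  have hcard : c = ((Finset.range n).filter (fun m' => (s m').1 = a)).card :=
    cnt_prefList a _ n
  have hle : (c : ℕ∞) ≤ spOcc s a := by
    rw [hcard, spOcc, ← Set.encard_coe_eq_coe_finsetCard]
    apply Set.encard_mono
    intro x hx
    simp only [Finset.coe_filter, Set.mem_setOf_eq, Finset.mem_range] at hx
    exact hx.2
  rw [Hocc a, dupOcc] at hle
  obtain ⟨t, hts, htc⟩ := Set.exists_subset_encard_eq hle
  have htfin : t.Finite := by
    rw [← Set.encard_ne_top_iff, htc]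
    exact ENat.coe_ne_top c
  have hYcard : htfin.toFinset.card = c := by
    have := htfin.encard_eq_coe_toFinset_card
    rw [htc] at this
    exact_mod_cast this.symm
  set Y := htfin.toFinset with hY
  refine ⟨Y.sup Prod.fst + 1, ?_⟩
  set M := Y.sup Prod.fst + 1 with hM
  rw [cnt_eq_card_filter, ← hYcard]
  apply Finset.card_le_card_of_injOn (fun x => (flatL θ s x.1).length + x.2)
  · intro x hx
    have hxX : x ∈ {x : ℕ × ℕ | ∃ mm, (resp θ s x.1)[x.2]? = some mm ∧ mm.1 = a} :=
      hts (htfin.mem_toFinset.1 hx)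
    obtain ⟨mm, hmm, hma⟩ := hxX
    have hx2 : x.2 < (resp θ s x.1).length := by
      by_contra hcon
      rw [List.getElem?_eq_none (by omega)] at hmm
      cases hmm
    have hx1M : x.1 + 1 ≤ M := by
      have : x.1 ≤ Y.sup Prod.fst := Finset.le_sup (f := Prod.fst) hx
      omega
    have hjlt : (flatL θ s x.1).length + x.2 < (flatL θ s (x.1 + 1)).length := by
      simp only [flatL, List.length_append]; omega
    have hjM : (flatL θ s x.1).length + x.2 < (flatL θ s M).length :=
      lt_of_lt_of_le hjlt (flatL_len_mono θ s hx1M)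
    simp only [Finset.mem_coe, Finset.mem_filter, Finset.mem_range, List.length_map]
    refine ⟨hjM, ?_⟩
    have hflat : (flatL θ s M)[(flatL θ s x.1).length + x.2]? = some mm := by
      rw [getElem?_of_prefix (flatL_prefix θ s hx1M) hjlt]
      show (flatL θ s x.1 ++ resp θ s x.1)[(flatL θ s x.1).length + x.2]? = some mm
      rw [List.getElem?_append_right (by omega)]
      simpa using hmm
    rw [List.getElem?_map, hflat]
    simp [hma]
  · intro x hx y hy hxy
    have hxX := hts (htfin.mem_toFinset.1 hx)
    have hyX := hts (htfin.mem_toFinset.1 hy)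
    obtain ⟨mmx, hmmx, _⟩ := hxX
    obtain ⟨mmy, hmmy, _⟩ := hyX
    have hx2 : x.2 < (resp θ s x.1).length := by
      by_contra hcon
      rw [List.getElem?_eq_none (by omega)] at hmmx
      cases hmmx
    have hy2 : y.2 < (resp θ s y.1).length := by
      by_contra hcon
      rw [List.getElem?_eq_none (by omega)] at hmmy
      cases hmmy
    simp only at hxy
    have hround : x.1 = y.1 := by
      by_contra hne
      rcases Nat.lt_or_ge x.1 y.1 with hlt | hge
      · have h1 : (flatL θ s x.1).length + x.2 < (flatL θ s (x.1 + 1)).length := by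
          simp only [flatL, List.length_append]; omega
        have h2 : (flatL θ s (x.1 + 1)).length ≤ (flatL θ s y.1).length :=
          flatL_len_mono θ s hlt
        omega
      · have hlt : y.1 < x.1 := by omega
        have h1 : (flatL θ s y.1).length + y.2 < (flatL θ s (y.1 + 1)).length := by
          simp only [flatL, List.length_append]; omega
        have h2 : (flatL θ s (y.1 + 1)).length ≤ (flatL θ s x.1).length :=
          flatL_len_mono θ s hlt
        omega
    have : x.2 = y.2 := by rw [hround] at hxy; omega
    exact Prod.ext hround this

/-- Every prefix of Spoiler's projected word is eventually dominated in length by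
Duplicator's projected word. -/
lemma exists_len_le [Fintype α] (Hocc : ∀ a, spOcc s a = dupOcc θ s a) (i : Fin k) (n : ℕ) :
    ∃ m, ((prefList (fun m' => (s m').1) n).filter (fun a => decide (a ∈ σ i))).length
      ≤ (((flatL θ s m).map Prod.fst).filter (fun a => decide (a ∈ σ i))).length := by
  classical
  choose g hg using fun a => exists_dup_count (θ := θ) Hocc a n
  refine ⟨Finset.univ.sup g, ?_⟩
  rw [length_filter_eq_sum (σ i), length_filter_eq_sum (σ i)]
  apply Finset.sum_le_sum
  intro a _
  by_cases ha : a ∈ σ i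
  · simp only [ha, if_true]
    refine (hg a).trans ?_
    apply cnt_le_of_sublist
    exact (((flatL_prefix θ s (Finset.le_sup (f := g) (Finset.mem_univ a))).map Prod.fst)).sublist
  · simp [ha]

end GameLemmas3


section Bridge

variable {P Q : Type} {k : ℕ}

lemma prefList_vword {θ : List (α × P) → List (α × Q)} {s : ℕ → α × P}
    {dflt : α × Q} (m : ℕ) :
    prefList (vword θ s dflt) ((flatL θ s m).length) = (flatL θ s m).map Prod.fst := by
  apply List.ext_getElem?
  intro j
  by_cases hj : j < (flatL θ s m).length
  · rw [prefList_getElem? _ hj, List.getElem?_map,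
      List.getElem?_eq_getElem hj]
    show some (vword θ s dflt j) = _
    rw [vword, fget_eq hj, List.getElem?_eq_getElem hj]
    rfl
  · rw [List.getElem?_eq_none (by simpa using hj),
      List.getElem?_eq_none (by simpa using hj)]

lemma seqOf_even {A : NBA α} (ρ : ARun A) (i : ℕ) :
    seqOf ρ (2 * i) = Sum.inl (ρ.val.1 i) := by
  unfold seqOf
  have h1 : (2 * i) % 2 = 0 := by omega
  have h2 : (2 * i) / 2 = i := by omega
  rw [h1, h2]
  simp

lemma seqOf_odd {A : NBA α} (ρ : ARun A) (i : ℕ) :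
    seqOf ρ (2 * i + 1) = Sum.inr (ρ.val.2 i) := by
  unfold seqOf
  have h1 : (2 * i + 1) % 2 = 1 := by omega
  have h2 : (2 * i + 1) / 2 = i := by omega
  rw [h1, h2]
  simp

/-- Spoiler's canonical move sequence determined by a run of `A`. -/
def sOf {A : NBA α} (ρ : ARun A) : ℕ → α × A.Q := fun n => (ρ.val.2 n, ρ.val.1 (n + 1))

end Bridge


/-- **Lemma.** If `A ⊑^{κ_ω}_σ B` (Duplicator wins the multi-buffer game with all
buffers unbounded), then there exists a continuous trace-preserving function
`f : ARun(A) → ARun(B)`. -/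
theorem exists_continuous_tracePres_of_simu {α : Type} [Fintype α] {k : ℕ}
    (σ : Fin k → Set α) (hcov : ∀ a : α, ∃ i, a ∈ σ i) (A B : NBA α)
    (h : Simu σ (kapAllOmega k) A B) :
    ∃ f : ARun A → ARun B, ContinuousRF f ∧ TracePres σ f := by
  classical
  obtain ⟨θ, hθ⟩ := h
  set c0 : Conf α A.Q B.Q k := ⟨A.init, fun _ => [], B.init⟩ with hc0def
  have hplayp : ∀ (ρ : ARun A) (n : ℕ), (playConf σ θ c0 (sOf ρ) n).p = ρ.val.1 n := by
    intro ρ n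
    cases n with
    | zero => exact ρ.2.1.symm
    | succ n => rfl
  have hlegal : ∀ (ρ : ARun A) (n : ℕ), SpLegalAt σ A.δ θ c0 (sOf ρ) n := by
    intro ρ n
    show (sOf ρ n).2 ∈ A.δ (playConf σ θ c0 (sOf ρ) n).p (sOf ρ n).1
    rw [hplayp ρ n]
    exact ρ.2.2.1 n
  have hsacc : ∀ ρ : ARun A, SpAccept A.F (sOf ρ) := by
    intro ρ
    apply Set.infinite_of_forall_exists_gt
    intro a
    obtain ⟨b, hb, hab⟩ := ρ.2.2.2.exists_gt (a + 1)
    refine ⟨b - 1, ?_, by omega⟩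
    show ρ.val.1 (b - 1 + 1) ∈ A.F
    rw [Nat.sub_add_cancel (by omega)]
    exact hb
  have hwin := fun ρ : ARun A => (hθ (sOf ρ)).2 (hlegal ρ) (hsacc ρ)
  have Hleg : ∀ (ρ : ARun A) (n : ℕ),
      DupLegal σ B.δ (spApply σ (playConf σ θ c0 (sOf ρ) n) (sOf ρ n)) (resp θ (sOf ρ) n) :=
    fun ρ n => ((hθ (sOf ρ)).1 n (fun m _ => hlegal ρ m)).1
  have Hacc : ∀ ρ : ARun A, {n | ∃ mm ∈ resp θ (sOf ρ) n, mm.2 ∈ B.F}.Infinite :=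
    fun ρ => (hwin ρ).1
  have Hocc : ∀ (ρ : ARun A) (a : α), spOcc (sOf ρ) a = dupOcc θ (sOf ρ) a :=
    fun ρ => (hwin ρ).2
  have Hlen : ∀ (ρ : ARun A) (j : ℕ), ∃ m, j < (flatL θ (sOf ρ) m).length :=
    fun ρ => fun j => hlen_of_acc (Hacc ρ) j
  have hrun : ∀ ρ : ARun A,
      (qseq θ (sOf ρ) B.init (ρ.val.2 0, B.init) 0 = B.init ∧
      (∀ n, qseq θ (sOf ρ) B.init (ρ.val.2 0, B.init) (n + 1)
        ∈ B.δ (qseq θ (sOf ρ) B.init (ρ.val.2 0, B.init) n)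
          (vword θ (sOf ρ) (ρ.val.2 0, B.init) n)) ∧
      {n | qseq θ (sOf ρ) B.init (ρ.val.2 0, B.init) n ∈ B.F}.Infinite) := by
    intro ρ
    refine ⟨rfl, fun n => ?_, ?_⟩
    · exact qseq_step (c0 := c0) (Hleg ρ) (Hlen ρ) n
    · apply Set.infinite_of_forall_exists_gt
      intro a
      obtain ⟨m0, hm0⟩ := Hlen ρ a
      obtain ⟨n, hn, hn0⟩ := (Hacc ρ).exists_gt m0
      obtain ⟨mm, hmm, hmmF⟩ := hn
      obtain ⟨l, hl, rfl⟩ := List.mem_iff_getElem.1 hmm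
      refine ⟨(flatL θ (sOf ρ) n).length + l + 1, ?_, ?_⟩
      · show qseq θ (sOf ρ) B.init (ρ.val.2 0, B.init) ((flatL θ (sOf ρ) n).length + l + 1) ∈ B.F
        have hval : qseq θ (sOf ρ) B.init (ρ.val.2 0, B.init) ((flatL θ (sOf ρ) n).length + l + 1)
            = ((resp θ (sOf ρ) n)[l]).2 := by
          show ((fget θ (sOf ρ) ((flatL θ (sOf ρ) n).length + l)).getD _).2 = _
          rw [fget_round hl]
          rfl
        rw [hval]
        exact hmmF
      · have := flatL_len_mono θ (sOf ρ) hn0.le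
        omega
  refine ⟨fun ρ => ⟨(qseq θ (sOf ρ) B.init (ρ.val.2 0, B.init),
      vword θ (sOf ρ) (ρ.val.2 0, B.init)), (hrun ρ).1, (hrun ρ).2.1, (hrun ρ).2.2⟩, ?_, ?_⟩
  · -- continuity
    intro ρ n
    obtain ⟨M, hM⟩ := Hlen ρ n
    refine ⟨2 * (M + n + 2) + 2, ?_⟩
    intro ρ' hagree j hj
    have hs : ∀ i < M + n + 2, sOf ρ' i = sOf ρ i := by
      intro i hi
      have h1 := hagree (2 * i + 1) (by omega)
      have h2 := hagree (2 * (i + 1)) (by omega)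
      rw [seqOf_odd, seqOf_odd] at h1
      rw [seqOf_even, seqOf_even] at h2
      have hw : ρ'.val.2 i = ρ.val.2 i := by injection h1
      have hr : ρ'.val.1 (i + 1) = ρ.val.1 (i + 1) := by injection h2
      show (ρ'.val.2 i, ρ'.val.1 (i + 1)) = (ρ.val.2 i, ρ.val.1 (i + 1))
      rw [hw, hr]
    have hflat : flatL θ (sOf ρ') M = flatL θ (sOf ρ) M :=
      flatL_congr (fun m hm => hs m (by omega))
    have hfget : ∀ j' < n, fget θ (sOf ρ') j' = fget θ (sOf ρ) j' := by
      intro j' hj'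
      have hj'M : j' < (flatL θ (sOf ρ) M).length := by omega
      have hj'M' : j' < (flatL θ (sOf ρ') M).length := by rw [hflat]; omega
      rw [fget_eq hj'M', fget_eq hj'M, hflat]
    have hdflt : (ρ'.val.2 0, B.init) = (ρ.val.2 0, (B.init : B.Q)) := by
      have := hs 0 (by omega)
      have hw : ρ'.val.2 0 = ρ.val.2 0 := congrArg Prod.fst this
      rw [hw]
    have hq : ∀ j' ≤ n, qseq θ (sOf ρ') B.init (ρ'.val.2 0, B.init) j'
        = qseq θ (sOf ρ) B.init (ρ.val.2 0, B.init) j' := by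
      intro j' hj'
      cases j' with
      | zero => rfl
      | succ j' =>
        show ((fget θ (sOf ρ') j').getD _).2 = ((fget θ (sOf ρ) j').getD _).2
        rw [hfget j' (by omega), hdflt]
    have hv : ∀ j' < n, vword θ (sOf ρ') (ρ'.val.2 0, B.init) j'
        = vword θ (sOf ρ) (ρ.val.2 0, B.init) j' := by
      intro j' hj'
      rw [vword, vword, hfget j' hj', hdflt]
    unfold seqOf
    by_cases hj2 : j % 2 = 0
    · rw [if_pos hj2, if_pos hj2]
      show Sum.inl (qseq θ (sOf ρ') B.init (ρ'.val.2 0, B.init) (j / 2)) = _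
      rw [hq (j / 2) (by omega)]
    · rw [if_neg hj2, if_neg hj2]
      show Sum.inr (vword θ (sOf ρ') (ρ'.val.2 0, B.init) (j / 2)) = _
      rw [hv (j / 2) (by omega)]
  · -- trace preservation
    intro ρ i
    have Hc0 : ∀ i : Fin k, c0.bufs i = [] := fun _ => rfl
    have hinv := buffer_inv (c0 := c0) Hc0 (Hleg ρ) i
    apply proj_eq_of_mutual (σ i) (ρ.val.2) (vword θ (sOf ρ) (ρ.val.2 0, B.init))
    · -- spoiler prefix inside duplicator
      intro nn
      obtain ⟨m, hm⟩ := exists_len_le (σ := σ) (Hocc ρ) i nn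
      refine ⟨(flatL θ (sOf ρ) m).length, ?_⟩
      rw [prefList_vword]
      have ha : (prefList (ρ.val.2) nn).filter (fun a => decide (a ∈ σ i))
          <+: (prefList (fun m' => ((sOf ρ) m').1) (max nn m)).filter (fun a => decide (a ∈ σ i)) :=
        (prefList_prefix _ (le_max_left nn m)).filter _
      have hb : (((flatL θ (sOf ρ) m).map Prod.fst).filter (fun a => decide (a ∈ σ i)))
          <+: (prefList (fun m' => ((sOf ρ) m').1) m).filter (fun a => decide (a ∈ σ i)) :=
        ⟨(playConf σ θ c0 (sOf ρ) m).bufs i, (hinv m).symm⟩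
      have hc : (prefList (fun m' => ((sOf ρ) m').1) m).filter (fun a => decide (a ∈ σ i))
          <+: (prefList (fun m' => ((sOf ρ) m').1) (max nn m)).filter (fun a => decide (a ∈ σ i)) :=
        (prefList_prefix _ (le_max_right nn m)).filter _
      exact List.prefix_of_prefix_length_le ha (hb.trans hc) hm
    · -- duplicator prefix inside spoiler
      intro nn
      obtain ⟨m, hm⟩ := Hlen ρ nn
      refine ⟨m, ?_⟩
      have h1 : prefList (vword θ (sOf ρ) (ρ.val.2 0, B.init)) nn
          <+: prefList (vword θ (sOf ρ) (ρ.val.2 0, B.init)) ((flatL θ (sOf ρ) m).length) :=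
        prefList_prefix _ hm.le
      have h2 : prefList (vword θ (sOf ρ) (ρ.val.2 0, B.init)) ((flatL θ (sOf ρ) m).length)
          = (flatL θ (sOf ρ) m).map Prod.fst := prefList_vword m
      have h3 : (((flatL θ (sOf ρ) m).map Prod.fst).filter (fun a => decide (a ∈ σ i)))
          <+: (prefList (fun m' => ((sOf ρ) m').1) m).filter (fun a => decide (a ∈ σ i)) :=
        ⟨(playConf σ θ c0 (sOf ρ) m).bufs i, (hinv m).symm⟩
      exact (h1.filter _).trans (h2 ▸ h3)


end MultiBuffer
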